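/- arXiv:1207.6458 — 6 statements merged into one kernel-verified Lean document; each statement's English description precedes it below -/
import Mathlib

section
/- Suppose complex numbers a_2, a_3, b_1, b_2, c_1, c_2 and real numbers α, β, B_1, B_2, D_1, D_2 with B_1, D_1 > 0 satisfy: (1+2α) a_2 = B_1 c_1/2; 2(1+3α) a_3 − (1+2α) a_2^2 = (B_1/2)(c_2 − c_1^2/2) + (B_2/4) c_1^2; −(1+2β) a_2 = D_1 b_1/2; and (3+10β) a_2^2 − 2(1+3β) a_3 = (D_1/2)(b_2 − b_1^2/2) + (D_2/4) b_1^2. Then b_1 = −(B_1(1+2β)/(D_1(1+2α))) c_1, and a_2^2 · [σ B_1^2 D_1^2 − (1+2α)^2(1+3β)(B_2−B_1) D_1^2 − (1+2β)^2(1+3α)(D_2−D_1) B_1^2] = (B_1^2 D_1^2/2)[B_1(1+3β) c_2 + D_1(1+3α) b_2], where σ = 2 + 7α + 7β + 24αβ. -/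
/-- The coefficient relations for `f ∈ P(α,φ)`, `f⁻¹ ∈ P(β,ψ)`. -/
theorem PP_coefficient_relations
    (a₂ a₃ b₁ b₂ c₁ c₂ : ℂ) (α β B₁ B₂ D₁ D₂ : ℝ)
    (hB₁ : 0 < B₁) (hD₁ : 0 < D₁) (hα : 1 + 2 * α ≠ 0)
    (h1 : (1 + 2 * (α : ℂ)) * a₂ = (B₁ : ℂ) * c₁ / 2)
    (h2 : 2 * (1 + 3 * (α : ℂ)) * a₃ - (1 + 2 * (α : ℂ)) * a₂ ^ 2
      = (B₁ : ℂ) / 2 * (c₂ - c₁ ^ 2 / 2) + (B₂ : ℂ) / 4 * c₁ ^ 2)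
    (h3 : -((1 + 2 * (β : ℂ)) * a₂) = (D₁ : ℂ) * b₁ / 2)
    (h4 : (3 + 10 * (β : ℂ)) * a₂ ^ 2 - 2 * (1 + 3 * (β : ℂ)) * a₃
      = (D₁ : ℂ) / 2 * (b₂ - b₁ ^ 2 / 2) + (D₂ : ℂ) / 4 * b₁ ^ 2) :
    b₁ = -((B₁ : ℂ) * (1 + 2 * (β : ℂ)) / ((D₁ : ℂ) * (1 + 2 * (α : ℂ)))) * c₁ ∧
    a₂ ^ 2 * (((2 + 7 * α + 7 * β + 24 * α * β : ℝ) : ℂ) * (B₁ : ℂ) ^ 2 * (D₁ : ℂ) ^ 2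
        - (1 + 2 * (α : ℂ)) ^ 2 * (1 + 3 * (β : ℂ)) * ((B₂ : ℂ) - (B₁ : ℂ)) * (D₁ : ℂ) ^ 2
        - (1 + 2 * (β : ℂ)) ^ 2 * (1 + 3 * (α : ℂ)) * ((D₂ : ℂ) - (D₁ : ℂ)) * (B₁ : ℂ) ^ 2)
      = (B₁ : ℂ) ^ 2 * (D₁ : ℂ) ^ 2 / 2
        * ((B₁ : ℂ) * (1 + 3 * (β : ℂ)) * c₂ + (D₁ : ℂ) * (1 + 3 * (α : ℂ)) * b₂) := by
  have hB : (B₁ : ℂ) ≠ 0 := by exact_mod_cast hB₁.ne'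
  have hD : (D₁ : ℂ) ≠ 0 := by exact_mod_cast hD₁.ne'
  have hα' : (1 + 2 * (α : ℂ)) ≠ 0 := by
    intro h; apply hα; exact_mod_cast (by push_cast; exact h : ((1 + 2 * α : ℝ) : ℂ) = 0)
  have hc2 : (B₁ : ℂ)^2 * c₁^2 = 4 * (1 + 2 * (α : ℂ))^2 * a₂^2 := by
    linear_combination (-2 * ((B₁ : ℂ) * c₁ + 2 * (1 + 2 * (α : ℂ)) * a₂)) * h1
  have hb2 : (D₁ : ℂ)^2 * b₁^2 = 4 * (1 + 2 * (β : ℂ))^2 * a₂^2 := by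
    linear_combination (-2 * ((D₁ : ℂ) * b₁ - 2 * (1 + 2 * (β : ℂ)) * a₂)) * h3
  constructor
  · field_simp
    linear_combination (-2 * (1 + 2 * (β : ℂ))) * h1 - (2 * (1 + 2 * (α : ℂ))) * h3
  · push_cast
    linear_combination
      ((B₁ : ℂ)^2 * (D₁ : ℂ)^2 * (1 + 3 * (β : ℂ))) * h2
      + ((B₁ : ℂ)^2 * (D₁ : ℂ)^2 * (1 + 3 * (α : ℂ))) * h4
      + ((D₁ : ℂ)^2 * (1 + 3 * (β : ℂ)) * ((B₂ : ℂ) - (B₁ : ℂ)) / 4) * hc2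
      + ((B₁ : ℂ)^2 * (1 + 3 * (α : ℂ)) * ((D₂ : ℂ) - (D₁ : ℂ)) / 4) * hb2
end

section
/- Under the system of equations in the previous context, if additionally |b_2| ≤ 2, |c_2| ≤ 2, and the denominator expression σ B_1^2 D_1^2 − (1+2α)^2(1+3β)(B_2−B_1) D_1^2 − (1+2β)^2(1+3α)(D_2−D_1) B_1^2 is nonzero, then |a_2| ≤ B_1 D_1 √(B_1(1+3β) + D_1(1+3α)) / √(|σ B_1^2 D_1^2 − (1+2α)^2(1+3β)(B_2−B_1) D_1^2 − (1+2β)^2(1+3α)(D_2−D_1) B_1^2|), where σ = 2 + 7α + 7β + 24αβ. -/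
/-- The bound on `|a₂|` when `f ∈ P(α,φ)` and `f⁻¹ ∈ P(β,ψ)`. -/
theorem PP_a2_bound
    (a₂ a₃ b₁ b₂ c₁ c₂ : ℂ) (α β B₁ B₂ D₁ D₂ : ℝ)
    (hα : 0 ≤ α) (hβ : 0 ≤ β) (hB₁ : 0 < B₁) (hD₁ : 0 < D₁)
    (h1 : (1 + 2 * (α : ℂ)) * a₂ = (B₁ : ℂ) * c₁ / 2)
    (h2 : 2 * (1 + 3 * (α : ℂ)) * a₃ - (1 + 2 * (α : ℂ)) * a₂ ^ 2
      = (B₁ : ℂ) / 2 * (c₂ - c₁ ^ 2 / 2) + (B₂ : ℂ) / 4 * c₁ ^ 2)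
    (h3 : -((1 + 2 * (β : ℂ)) * a₂) = (D₁ : ℂ) * b₁ / 2)
    (h4 : (3 + 10 * (β : ℂ)) * a₂ ^ 2 - 2 * (1 + 3 * (β : ℂ)) * a₃
      = (D₁ : ℂ) / 2 * (b₂ - b₁ ^ 2 / 2) + (D₂ : ℂ) / 4 * b₁ ^ 2)
    (hb₂ : ‖b₂‖ ≤ 2) (hc₂ : ‖c₂‖ ≤ 2)
    (hden : (2 + 7 * α + 7 * β + 24 * α * β) * B₁ ^ 2 * D₁ ^ 2
        - (1 + 2 * α) ^ 2 * (1 + 3 * β) * (B₂ - B₁) * D₁ ^ 2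
        - (1 + 2 * β) ^ 2 * (1 + 3 * α) * (D₂ - D₁) * B₁ ^ 2 ≠ 0) :
    ‖a₂‖ ≤
      B₁ * D₁ * Real.sqrt (B₁ * (1 + 3 * β) + D₁ * (1 + 3 * α)) /
        Real.sqrt |(2 + 7 * α + 7 * β + 24 * α * β) * B₁ ^ 2 * D₁ ^ 2
          - (1 + 2 * α) ^ 2 * (1 + 3 * β) * (B₂ - B₁) * D₁ ^ 2
          - (1 + 2 * β) ^ 2 * (1 + 3 * α) * (D₂ - D₁) * B₁ ^ 2| := by
  set E : ℝ := (2 + 7 * α + 7 * β + 24 * α * β) * B₁ ^ 2 * D₁ ^ 2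
      - (1 + 2 * α) ^ 2 * (1 + 3 * β) * (B₂ - B₁) * D₁ ^ 2
      - (1 + 2 * β) ^ 2 * (1 + 3 * α) * (D₂ - D₁) * B₁ ^ 2 with hE
  set S : ℝ := B₁ * (1 + 3 * β) + D₁ * (1 + 3 * α) with hS
  have hSpos : 0 < S := by
    have : 0 < B₁ * (1 + 3 * β) := by positivity
    have : 0 < D₁ * (1 + 3 * α) := by positivity
    positivity
  have key : (E : ℂ) * a₂ ^ 2 =
      (B₁ : ℂ) ^ 2 * (D₁ : ℂ) ^ 2 *
        ((1 + 3 * (β : ℂ)) * B₁ * c₂ + (1 + 3 * (α : ℂ)) * D₁ * b₂) / 2 := by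
    rw [hE]
    push_cast
    linear_combination ((1 + 3 * (β : ℂ)) * B₁ ^ 2 * D₁ ^ 2) * h2
      + ((1 + 3 * (α : ℂ)) * B₁ ^ 2 * D₁ ^ 2) * h4
      + (-(1 + 3 * (β : ℂ)) * (B₂ - B₁) * D₁ ^ 2 * ((1 + 2 * (α : ℂ)) * a₂ + B₁ * c₁ / 2)) * h1
      + (-(1 + 3 * (α : ℂ)) * (D₂ - D₁) * B₁ ^ 2
          * (-((1 + 2 * (β : ℂ)) * a₂) + D₁ * b₁ / 2)) * h3
  -- take absolute values
  have habs : |E| * ‖a₂‖ ^ 2 =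
      B₁ ^ 2 * D₁ ^ 2 *
        ‖(1 + 3 * (β : ℂ)) * B₁ * c₂ + (1 + 3 * (α : ℂ)) * D₁ * b₂‖ / 2 := by
    have := congrArg norm key
    simpa [norm_mul, norm_div, norm_pow, Complex.norm_real, Real.norm_eq_abs, abs_of_pos hB₁, abs_of_pos hD₁]
      using this
  have htri : ‖(1 + 3 * (β : ℂ)) * B₁ * c₂ + (1 + 3 * (α : ℂ)) * D₁ * b₂‖
      ≤ 2 * S := by
    calc ‖(1 + 3 * (β : ℂ)) * B₁ * c₂ + (1 + 3 * (α : ℂ)) * D₁ * b₂‖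
        ≤ ‖(1 + 3 * (β : ℂ)) * B₁ * c₂‖
          + ‖(1 + 3 * (α : ℂ)) * D₁ * b₂‖ := norm_add_le _ _
      _ = (1 + 3 * β) * B₁ * ‖c₂‖ + (1 + 3 * α) * D₁ * ‖b₂‖ := by
          have e1 : (1 + 3 * (β : ℂ)) * B₁ * c₂ = (((1 + 3 * β) * B₁ : ℝ) : ℂ) * c₂ := by
            push_cast; ring
          have e2 : (1 + 3 * (α : ℂ)) * D₁ * b₂ = (((1 + 3 * α) * D₁ : ℝ) : ℂ) * b₂ := by
            push_cast; ring
          rw [e1, e2, norm_mul, norm_mul, Complex.norm_real, Complex.norm_real, Real.norm_eq_abs, Real.norm_eq_abs,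
            abs_of_nonneg (by positivity), abs_of_nonneg (by positivity)]
      _ ≤ (1 + 3 * β) * B₁ * 2 + (1 + 3 * α) * D₁ * 2 := by
          gcongr <;> positivity
      _ = 2 * S := by rw [hS]; ring
  have hEpos : 0 < |E| := abs_pos.mpr hden
  have hsq : ‖a₂‖ ^ 2 ≤ B₁ ^ 2 * D₁ ^ 2 * S / |E| := by
    rw [le_div_iff₀ hEpos]
    calc ‖a₂‖ ^ 2 * |E| = |E| * ‖a₂‖ ^ 2 := by ring
      _ = B₁ ^ 2 * D₁ ^ 2 *
            ‖(1 + 3 * (β : ℂ)) * B₁ * c₂ + (1 + 3 * (α : ℂ)) * D₁ * b₂‖ / 2 := habs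
      _ ≤ B₁ ^ 2 * D₁ ^ 2 * (2 * S) / 2 := by gcongr
      _ = B₁ ^ 2 * D₁ ^ 2 * S := by ring
  have hgoal : ‖a₂‖ ≤ Real.sqrt (B₁ ^ 2 * D₁ ^ 2 * S / |E|) := by
    rw [show ‖a₂‖ = Real.sqrt (‖a₂‖ ^ 2) by
      rw [Real.sqrt_sq (norm_nonneg _)]]
    exact Real.sqrt_le_sqrt hsq
  refine hgoal.trans_eq ?_
  rw [Real.sqrt_div' _ (by positivity), Real.sqrt_mul (by positivity), Real.sqrt_mul (by positivity)]
  rw [Real.sqrt_sq hB₁.le, Real.sqrt_sq hD₁.le]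
end

section
/- Suppose complex numbers a_2, a_3, b_1, b_2, c_1, c_2 and reals α ≥ 0, β ≥ 0, B_1 > 0, D_1 > 0, B_2, D_2 satisfy the four equations: (1+2α)a_2 = B_1 c_1/2; 2(1+3α)a_3 − (1+2α)a_2^2 = (B_1/2)(c_2 − c_1^2/2) + (B_2/4)c_1^2; −(1+2β)a_2 = D_1 b_1/2; (3+10β)a_2^2 − 2(1+3β)a_3 = (D_1/2)(b_2 − b_1^2/2) + (D_2/4)b_1^2; together with |b_2| ≤ 2, |c_1| ≤ 2, |c_2| ≤ 2. Then with σ = 2+7α+7β+24αβ, 2σ|a_3| ≤ B_1(3+10β) + D_1(1+2α) + (3+10β)|B_2−B_1| + (1+2β)^2 B_1^2 |D_2−D_1| / (D_1^2 (1+2α)). -/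
/-- The bound on `|a₃|` when `f ∈ P(α,φ)` and `f⁻¹ ∈ P(β,ψ)`. -/
theorem PP_a3_bound
    (a₂ a₃ b₁ b₂ c₁ c₂ : ℂ) (α β B₁ B₂ D₁ D₂ : ℝ)
    (hα : 0 ≤ α) (hβ : 0 ≤ β) (hB₁ : 0 < B₁) (hD₁ : 0 < D₁)
    (h1 : (1 + 2 * (α : ℂ)) * a₂ = (B₁ : ℂ) * c₁ / 2)
    (h2 : 2 * (1 + 3 * (α : ℂ)) * a₃ - (1 + 2 * (α : ℂ)) * a₂ ^ 2
      = (B₁ : ℂ) / 2 * (c₂ - c₁ ^ 2 / 2) + (B₂ : ℂ) / 4 * c₁ ^ 2)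
    (h3 : -((1 + 2 * (β : ℂ)) * a₂) = (D₁ : ℂ) * b₁ / 2)
    (h4 : (3 + 10 * (β : ℂ)) * a₂ ^ 2 - 2 * (1 + 3 * (β : ℂ)) * a₃
      = (D₁ : ℂ) / 2 * (b₂ - b₁ ^ 2 / 2) + (D₂ : ℂ) / 4 * b₁ ^ 2)
    (hb₂ : ‖b₂‖ ≤ 2) (hc₁ : ‖c₁‖ ≤ 2) (hc₂ : ‖c₂‖ ≤ 2) :
    2 * (2 + 7 * α + 7 * β + 24 * α * β) * ‖a₃‖ ≤
      B₁ * (3 + 10 * β) + D₁ * (1 + 2 * α) + (3 + 10 * β) * |B₂ - B₁|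
        + (1 + 2 * β) ^ 2 * B₁ ^ 2 * |D₂ - D₁| / (D₁ ^ 2 * (1 + 2 * α)) := by
  have hA : (0:ℝ) < 1 + 2 * α := by linarith
  have hP : (0:ℝ) < D₁ ^ 2 * (1 + 2 * α) := by positivity
  have h5 : (D₁:ℂ) * (1 + 2*(α:ℂ)) * b₁ = -((1 + 2*(β:ℂ)) * (B₁:ℂ) * c₁) := by
    linear_combination (-2)*(1 + 2*(α:ℂ))*h3 - 2*(1 + 2*(β:ℂ))*h1
  set m1 : ℝ := D₁^2*(1+2*α)*(3+10*β)*B₁/2 with hm1d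
  set x : ℝ := D₁^2*(1+2*α)*(3+10*β)*(B₂-B₁)/4 with hxd
  set y : ℝ := (1+2*β)^2*B₁^2*(D₂-D₁)/4 with hyd
  set m3 : ℝ := D₁^3*(1+2*α)^2/2 with hm3d
  have keyC : ((D₁^2*(1+2*α) : ℝ):ℂ) * ((2*(2+7*α+7*β+24*α*β) : ℝ):ℂ) * a₃
      = ((m1:ℝ):ℂ) * c₂ + (((x+y:ℝ)):ℂ) * c₁^2 + ((m3:ℝ):ℂ) * b₂ := by
    rw [hm1d, hxd, hyd, hm3d]
    push_cast
    linear_combination ((D₁:ℂ)^2*(1+2*(α:ℂ))*(3+10*(β:ℂ)))*h2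
      + ((D₁:ℂ)^2*(1+2*(α:ℂ))^2)*h4
      + (((D₂:ℂ)-D₁)/4*((D₁:ℂ)*(1+2*(α:ℂ))*b₁ - (1+2*(β:ℂ))*(B₁:ℂ)*c₁))*h5
  -- nonnegativity facts
  have hσ : (0:ℝ) ≤ 2*(2+7*α+7*β+24*α*β) := by nlinarith
  have hm1 : (0:ℝ) ≤ m1 := by rw [hm1d]; positivity
  have hm3 : (0:ℝ) ≤ m3 := by rw [hm3d]; positivity
  have hxabs : |x| = D₁^2*(1+2*α)*(3+10*β)*|B₂-B₁|/4 := by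
    rw [hxd, abs_div, abs_mul, abs_of_nonneg (by positivity : (0:ℝ) ≤ D₁^2*(1+2*α)*(3+10*β))]
    norm_num
  have hyabs : |y| = (1+2*β)^2*B₁^2*|D₂-D₁|/4 := by
    rw [hyd, abs_div, abs_mul, abs_of_nonneg (by positivity : (0:ℝ) ≤ (1+2*β)^2*B₁^2)]
    norm_num
  have hc₁sq : ‖c₁‖ ^ 2 ≤ 4 := by nlinarith [norm_nonneg c₁]
  have hmain : (D₁^2*(1+2*α)) * (2*(2+7*α+7*β+24*α*β)) * ‖a₃‖
      ≤ (B₁*(3+10*β) + D₁*(1+2*α) + (3+10*β)*|B₂-B₁|) * (D₁^2*(1+2*α))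
        + (1+2*β)^2*B₁^2*|D₂-D₁| := by
    calc (D₁^2*(1+2*α)) * (2*(2+7*α+7*β+24*α*β)) * ‖a₃‖
        = ‖(((D₁^2*(1+2*α) : ℝ):ℂ) * ((2*(2+7*α+7*β+24*α*β) : ℝ):ℂ) * a₃)‖ := by
          rw [norm_mul, norm_mul, Complex.norm_real, Complex.norm_real, Real.norm_eq_abs, Real.norm_eq_abs,
            abs_of_nonneg hP.le, abs_of_nonneg hσ]
      _ = ‖(((m1:ℝ):ℂ) * c₂ + (((x+y:ℝ)):ℂ) * c₁^2 + ((m3:ℝ):ℂ) * b₂)‖ := by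
          rw [keyC]
      _ ≤ ‖(((m1:ℝ):ℂ) * c₂ + (((x+y:ℝ)):ℂ) * c₁^2)‖ + ‖(((m3:ℝ):ℂ) * b₂)‖ :=
          norm_add_le _ _
      _ ≤ ‖(((m1:ℝ):ℂ) * c₂)‖ + ‖((((x+y:ℝ)):ℂ) * c₁^2)‖
            + ‖(((m3:ℝ):ℂ) * b₂)‖ := by
          gcongr; exact norm_add_le _ _
      _ = |m1| * ‖c₂‖ + |x+y| * ‖c₁‖ ^ 2 + |m3| * ‖b₂‖ := by
          rw [norm_mul, norm_mul, norm_mul, norm_pow, Complex.norm_real, Complex.norm_real,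
            Complex.norm_real, Real.norm_eq_abs, Real.norm_eq_abs, Real.norm_eq_abs]
      _ ≤ m1 * 2 + (|x| + |y|) * 4 + m3 * 2 := by
          have t1 : |m1| * ‖c₂‖ ≤ m1 * 2 := by
            rw [abs_of_nonneg hm1]; exact mul_le_mul_of_nonneg_left hc₂ hm1
          have t3 : |m3| * ‖b₂‖ ≤ m3 * 2 := by
            rw [abs_of_nonneg hm3]; exact mul_le_mul_of_nonneg_left hb₂ hm3
          have t2 : |x + y| * ‖c₁‖ ^ 2 ≤ (|x| + |y|) * 4 :=
            mul_le_mul (abs_add_le x y) hc₁sq (by positivity) (by positivity)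
          linarith
      _ ≤ _ := by
          rw [hxabs, hyabs, hm1d, hm3d]; apply le_of_eq; ring
  rw [← mul_le_mul_iff_left₀ hP]
  have expand : (B₁*(3+10*β) + D₁*(1+2*α) + (3+10*β)*|B₂-B₁|
      + (1+2*β)^2*B₁^2*|D₂-D₁|/(D₁^2*(1+2*α))) * (D₁^2*(1+2*α))
      = (B₁*(3+10*β) + D₁*(1+2*α) + (3+10*β)*|B₂-B₁|) * (D₁^2*(1+2*α))
        + (1+2*β)^2*B₁^2*|D₂-D₁| := by
    field_simp
  calc 2*(2+7*α+7*β+24*α*β) * ‖a₃‖ * (D₁^2*(1+2*α))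
      = (D₁^2*(1+2*α)) * (2*(2+7*α+7*β+24*α*β)) * ‖a₃‖ := by ring
    _ ≤ _ := by rw [expand] at *; linarith [hmain]
end

section
/- Suppose complex numbers a_2, a_3, b_1, b_2, c_1, c_2 and reals α ≥ 0, β ≥ 0, B_1 > 0, D_1 > 0, B_2, D_2 satisfy: (1+α)a_2 = B_1 c_1/2; 2(1+2α)a_3 − (1+3α)a_2^2 = (B_1/2)(c_2 − c_1^2/2) + (B_2/4)c_1^2; −(1+β)a_2 = D_1 b_1/2; (3+5β)a_2^2 − 2(1+2β)a_3 = (D_1/2)(b_2 − b_1^2/2) + (D_2/4)b_1^2. Then b_1 = −(B_1(1+β)/(D_1(1+α))) c_1, and a_2^2 · 2[σ B_1^2 D_1^2 − (1+α)^2(1+2β)(B_2−B_1)D_1^2 − (1+β)^2(1+2α)(D_2−D_1)B_1^2] = B_1^2 D_1^2 [B_1(1+2β)c_2 + D_1(1+2α)b_2], where σ = 2 + 3α + 3β + 4αβ. -/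
/-- The coefficient relations for `f ∈ M(α,φ)`, `f⁻¹ ∈ M(β,ψ)`. -/
theorem MM_coefficient_relations
    (a₂ a₃ b₁ b₂ c₁ c₂ : ℂ) (α β B₁ B₂ D₁ D₂ : ℝ)
    (hα : 0 ≤ α) (hβ : 0 ≤ β) (hB₁ : 0 < B₁) (hD₁ : 0 < D₁)
    (h1 : (1 + (α : ℂ)) * a₂ = (B₁ : ℂ) * c₁ / 2)
    (h2 : 2 * (1 + 2 * (α : ℂ)) * a₃ - (1 + 3 * (α : ℂ)) * a₂ ^ 2
      = (B₁ : ℂ) / 2 * (c₂ - c₁ ^ 2 / 2) + (B₂ : ℂ) / 4 * c₁ ^ 2)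
    (h3 : -((1 + (β : ℂ)) * a₂) = (D₁ : ℂ) * b₁ / 2)
    (h4 : (3 + 5 * (β : ℂ)) * a₂ ^ 2 - 2 * (1 + 2 * (β : ℂ)) * a₃
      = (D₁ : ℂ) / 2 * (b₂ - b₁ ^ 2 / 2) + (D₂ : ℂ) / 4 * b₁ ^ 2) :
    b₁ = -((B₁ : ℂ) * (1 + (β : ℂ)) / ((D₁ : ℂ) * (1 + (α : ℂ)))) * c₁ ∧
    a₂ ^ 2 * (2 * (((2 + 3 * α + 3 * β + 4 * α * β : ℝ) : ℂ) * (B₁ : ℂ) ^ 2 * (D₁ : ℂ) ^ 2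
        - (1 + (α : ℂ)) ^ 2 * (1 + 2 * (β : ℂ)) * ((B₂ : ℂ) - (B₁ : ℂ)) * (D₁ : ℂ) ^ 2
        - (1 + (β : ℂ)) ^ 2 * (1 + 2 * (α : ℂ)) * ((D₂ : ℂ) - (D₁ : ℂ)) * (B₁ : ℂ) ^ 2))
      = (B₁ : ℂ) ^ 2 * (D₁ : ℂ) ^ 2
        * ((B₁ : ℂ) * (1 + 2 * (β : ℂ)) * c₂ + (D₁ : ℂ) * (1 + 2 * (α : ℂ)) * b₂) := by
  have hB : (B₁ : ℂ) ≠ 0 := by exact_mod_cast hB₁.ne'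
  have hD : (D₁ : ℂ) ≠ 0 := by exact_mod_cast hD₁.ne'
  have hX : (1 + (α : ℂ)) ≠ 0 := by
    have : ((1 + α : ℝ) : ℂ) ≠ 0 := by exact_mod_cast (by linarith : (0:ℝ) < 1 + α).ne'
    simpa using this
  have hc : (B₁ : ℂ) * c₁ = 2 * (1 + (α : ℂ)) * a₂ := by linear_combination -2 * h1
  have hb : (D₁ : ℂ) * b₁ = -(2 * (1 + (β : ℂ)) * a₂) := by linear_combination -2 * h3
  constructor
  · field_simp
    linear_combination (1 + (α : ℂ)) * hb + (1 + (β : ℂ)) * hc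
  · push_cast
    linear_combination
      2 * (1 + 2*(β:ℂ)) * (B₁:ℂ)^2 * (D₁:ℂ)^2 * h2
      + 2 * (1 + 2*(α:ℂ)) * (B₁:ℂ)^2 * (D₁:ℂ)^2 * h4
      + ((1 + 2*(β:ℂ)) * ((B₂:ℂ) - B₁) * (D₁:ℂ)^2 / 2) * ((B₁:ℂ)*c₁ + 2*(1+(α:ℂ))*a₂) * hc
      + ((1 + 2*(α:ℂ)) * ((D₂:ℂ) - D₁) * (B₁:ℂ)^2 / 2) * ((D₁:ℂ)*b₁ - 2*(1+(β:ℂ))*a₂) * hb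
end

section
/- Under the hypotheses of the M(α,φ)–M(β,ψ) coefficient system, if additionally |b_2| ≤ 2, |c_2| ≤ 2, and σ B_1^2 D_1^2 − (1+α)^2(1+2β)(B_2−B_1)D_1^2 − (1+β)^2(1+2α)(D_2−D_1)B_1^2 ≠ 0, then |a_2| ≤ B_1 D_1 √(B_1(1+2β) + D_1(1+2α)) / √(|σ B_1^2 D_1^2 − (1+α)^2(1+2β)(B_2−B_1)D_1^2 − (1+β)^2(1+2α)(D_2−D_1)B_1^2|), where σ = 2 + 3α + 3β + 4αβ. -/
/-- The bound on `|a₂|` when `f ∈ M(α,φ)` and `f⁻¹ ∈ M(β,ψ)`. -/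
theorem MM_a2_bound
    (a₂ a₃ b₁ b₂ c₁ c₂ : ℂ) (α β B₁ B₂ D₁ D₂ : ℝ)
    (hα : 0 ≤ α) (hβ : 0 ≤ β) (hB₁ : 0 < B₁) (hD₁ : 0 < D₁)
    (h1 : (1 + (α : ℂ)) * a₂ = (B₁ : ℂ) * c₁ / 2)
    (h2 : 2 * (1 + 2 * (α : ℂ)) * a₃ - (1 + 3 * (α : ℂ)) * a₂ ^ 2
      = (B₁ : ℂ) / 2 * (c₂ - c₁ ^ 2 / 2) + (B₂ : ℂ) / 4 * c₁ ^ 2)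
    (h3 : -((1 + (β : ℂ)) * a₂) = (D₁ : ℂ) * b₁ / 2)
    (h4 : (3 + 5 * (β : ℂ)) * a₂ ^ 2 - 2 * (1 + 2 * (β : ℂ)) * a₃
      = (D₁ : ℂ) / 2 * (b₂ - b₁ ^ 2 / 2) + (D₂ : ℂ) / 4 * b₁ ^ 2)
    (hb₂ : ‖b₂‖ ≤ 2) (hc₂ : ‖c₂‖ ≤ 2)
    (hden : (2 + 3 * α + 3 * β + 4 * α * β) * B₁ ^ 2 * D₁ ^ 2
        - (1 + α) ^ 2 * (1 + 2 * β) * (B₂ - B₁) * D₁ ^ 2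
        - (1 + β) ^ 2 * (1 + 2 * α) * (D₂ - D₁) * B₁ ^ 2 ≠ 0) :
    ‖a₂‖ ≤
      B₁ * D₁ * Real.sqrt (B₁ * (1 + 2 * β) + D₁ * (1 + 2 * α)) /
        Real.sqrt |(2 + 3 * α + 3 * β + 4 * α * β) * B₁ ^ 2 * D₁ ^ 2
          - (1 + α) ^ 2 * (1 + 2 * β) * (B₂ - B₁) * D₁ ^ 2
          - (1 + β) ^ 2 * (1 + 2 * α) * (D₂ - D₁) * B₁ ^ 2| := by
  set E : ℝ := (2 + 3 * α + 3 * β + 4 * α * β) * B₁ ^ 2 * D₁ ^ 2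
        - (1 + α) ^ 2 * (1 + 2 * β) * (B₂ - B₁) * D₁ ^ 2
        - (1 + β) ^ 2 * (1 + 2 * α) * (D₂ - D₁) * B₁ ^ 2 with hE
  have hc : (B₁:ℂ)^2 * c₁^2 = 4*(1+(α:ℂ))^2*a₂^2 := by
    linear_combination (-(2*(B₁:ℂ)*c₁ + 4*(1+(α:ℂ))*a₂)) * h1
  have hb : (D₁:ℂ)^2 * b₁^2 = 4*(1+(β:ℂ))^2*a₂^2 := by
    linear_combination (4*(1+(β:ℂ))*a₂ - 2*(D₁:ℂ)*b₁) * h3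
  have key : a₂^2 * (E:ℂ)
      = (B₁:ℂ)^2 * (D₁:ℂ)^2 * ((1+2*(β:ℂ))*(B₁:ℂ)*c₂ + (1+2*(α:ℂ))*(D₁:ℂ)*b₂) / 2 := by
    rw [hE]; push_cast
    linear_combination (1+2*(β:ℂ))*(B₁:ℂ)^2*(D₁:ℂ)^2 * h2
      + (1+2*(α:ℂ))*(B₁:ℂ)^2*(D₁:ℂ)^2 * h4
      + (1+2*(β:ℂ))*((B₂:ℂ)-(B₁:ℂ))*(D₁:ℂ)^2/4 * hc
      + (1+2*(α:ℂ))*((D₂:ℂ)-(D₁:ℂ))*(B₁:ℂ)^2/4 * hb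
  have hS : 0 < B₁ * (1 + 2 * β) + D₁ * (1 + 2 * α) := by positivity
  have hEpos : 0 < |E| := abs_pos.mpr hden
  have e1 : ((1:ℂ)+2*(β:ℂ))*(B₁:ℂ) = (((1+2*β)*B₁ : ℝ) : ℂ) := by push_cast; ring
  have e2 : ((1:ℂ)+2*(α:ℂ))*(D₁:ℂ) = (((1+2*α)*D₁ : ℝ) : ℂ) := by push_cast; ring
  -- bound on |a₂|²
  have habs : ‖a₂‖ ^ 2 * |E|
      ≤ B₁ ^ 2 * D₁ ^ 2 * (B₁ * (1 + 2 * β) + D₁ * (1 + 2 * α)) := by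
    have this2 : ‖a₂‖ ^ 2 * |E|
        = B₁ ^ 2 * D₁ ^ 2 * ‖(1+2*(β:ℂ))*(B₁:ℂ)*c₂ + (1+2*(α:ℂ))*(D₁:ℂ)*b₂‖ / 2 := by
      have := congrArg (‖·‖) key
      simp only [norm_mul, norm_div, norm_pow, Complex.norm_real, Real.norm_eq_abs, Complex.norm_two] at this
      rw [abs_of_pos hB₁, abs_of_pos hD₁] at this
      exact this
    have hbound : ‖(1+2*(β:ℂ))*(B₁:ℂ)*c₂ + (1+2*(α:ℂ))*(D₁:ℂ)*b₂‖
        ≤ 2 * (B₁ * (1 + 2 * β) + D₁ * (1 + 2 * α)) := by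
      calc ‖(1+2*(β:ℂ))*(B₁:ℂ)*c₂ + (1+2*(α:ℂ))*(D₁:ℂ)*b₂‖
          ≤ ‖(1+2*(β:ℂ))*(B₁:ℂ)‖ * ‖c₂‖
            + ‖(1+2*(α:ℂ))*(D₁:ℂ)‖ * ‖b₂‖ := by
            refine (norm_add_le _ _).trans_eq ?_
            simp only [norm_mul]
        _ ≤ ‖(1+2*(β:ℂ))*(B₁:ℂ)‖ * 2 + ‖(1+2*(α:ℂ))*(D₁:ℂ)‖ * 2 := by
            gcongr
        _ = 2 * (B₁ * (1 + 2 * β) + D₁ * (1 + 2 * α)) := by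
            rw [e1, e2, Complex.norm_real, Complex.norm_real, Real.norm_eq_abs, Real.norm_eq_abs,
              abs_of_pos (by positivity), abs_of_pos (by positivity)]
            ring
    calc ‖a₂‖ ^ 2 * |E|
        = B₁ ^ 2 * D₁ ^ 2 * ‖(1+2*(β:ℂ))*(B₁:ℂ)*c₂ + (1+2*(α:ℂ))*(D₁:ℂ)*b₂‖ / 2 :=
          this2
      _ ≤ B₁ ^ 2 * D₁ ^ 2 * (2 * (B₁ * (1 + 2 * β) + D₁ * (1 + 2 * α))) / 2 := by gcongr
      _ = B₁ ^ 2 * D₁ ^ 2 * (B₁ * (1 + 2 * β) + D₁ * (1 + 2 * α)) := by ring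
  have hsq : ‖a₂‖ ^ 2
      ≤ B₁ ^ 2 * D₁ ^ 2 * (B₁ * (1 + 2 * β) + D₁ * (1 + 2 * α)) / |E| :=
    (le_div_iff₀ hEpos).mpr habs
  have h1' : ‖a₂‖ = Real.sqrt (‖a₂‖ ^ 2) := by
    rw [Real.sqrt_sq (norm_nonneg _)]
  rw [h1']
  have hrhs : B₁ * D₁ * Real.sqrt (B₁ * (1 + 2 * β) + D₁ * (1 + 2 * α)) /
      Real.sqrt |E|
      = Real.sqrt (B₁ ^ 2 * D₁ ^ 2 * (B₁ * (1 + 2 * β) + D₁ * (1 + 2 * α)) / |E|) := by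
    rw [Real.sqrt_div (by positivity),
      show B₁ ^ 2 * D₁ ^ 2 * (B₁ * (1 + 2 * β) + D₁ * (1 + 2 * α))
        = (B₁ * D₁) ^ 2 * (B₁ * (1 + 2 * β) + D₁ * (1 + 2 * α)) by ring,
      Real.sqrt_mul (by positivity), Real.sqrt_sq (by positivity)]
  rw [hrhs]
  exact Real.sqrt_le_sqrt hsq
end

section
/- Suppose complex numbers a_2, a_3, b_1, b_2, c_1, c_2 and reals α ≥ 0, β ∈ [0,1], B_1 > 0, D_1 > 0, B_2, D_2 satisfy: (1+2α)a_2 = B_1 c_1/2; 2(1+3α)a_3 − (1+2α)a_2^2 = (B_1/2)(c_2 − c_1^2/2) + (B_2/4)c_1^2; −(2−β)a_2 = D_1 b_1/2; (8(1−β) + (β/2)(β+5))a_2^2 − 2(3−2β)a_3 = (D_1/2)(b_2 − b_1^2/2) + (D_2/4)b_1^2; and |b_2| ≤ 2, |c_1| ≤ 2, |c_2| ≤ 2. Then with σ = 10 + 36α − 7β − 25αβ + β^2 + 3αβ^2, σ|a_3| ≤ (1/2)B_1(β^2 − 11β + 16) + D_1(1+2α) + (1/2)(β^2 − 11β + 16)|B_2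 − B_1| + (2−β)^2 B_1^2 |D_2 − D_1| / (D_1^2 (1+2α)). -/
set_option maxHeartbeats 1000000 in
/-- The bound on `|a₃|` when `f ∈ P(α,φ)` and `f⁻¹ ∈ L(β,ψ)`. -/
theorem PL_a3_bound
    (a₂ a₃ b₁ b₂ c₁ c₂ : ℂ) (α β B₁ B₂ D₁ D₂ : ℝ)
    (hα : 0 ≤ α) (hβ0 : 0 ≤ β) (hβ1 : β ≤ 1) (hB₁ : 0 < B₁) (hD₁ : 0 < D₁)
    (h1 : (1 + 2 * (α : ℂ)) * a₂ = (B₁ : ℂ) * c₁ / 2)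
    (h2 : 2 * (1 + 3 * (α : ℂ)) * a₃ - (1 + 2 * (α : ℂ)) * a₂ ^ 2
      = (B₁ : ℂ) / 2 * (c₂ - c₁ ^ 2 / 2) + (B₂ : ℂ) / 4 * c₁ ^ 2)
    (h3 : -((2 - (β : ℂ)) * a₂) = (D₁ : ℂ) * b₁ / 2)
    (h4 : (8 * (1 - (β : ℂ)) + (β : ℂ) / 2 * ((β : ℂ) + 5)) * a₂ ^ 2
        - 2 * (3 - 2 * (β : ℂ)) * a₃
      = (D₁ : ℂ) / 2 * (b₂ - b₁ ^ 2 / 2) + (D₂ : ℂ) / 4 * b₁ ^ 2)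
    (hb₂ : ‖b₂‖ ≤ 2) (hc₁ : ‖c₁‖ ≤ 2) (hc₂ : ‖c₂‖ ≤ 2) :
    (10 + 36 * α - 7 * β - 25 * α * β + β ^ 2 + 3 * α * β ^ 2) * ‖a₃‖ ≤
      1 / 2 * B₁ * (β ^ 2 - 11 * β + 16) + D₁ * (1 + 2 * α)
        + 1 / 2 * (β ^ 2 - 11 * β + 16) * |B₂ - B₁|
        + (2 - β) ^ 2 * B₁ ^ 2 * |D₂ - D₁| / (D₁ ^ 2 * (1 + 2 * α)) := by
  have hA : (0:ℝ) < 1 + 2*α := by linarith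
  have hσ : (0:ℝ) < 10 + 36 * α - 7 * β - 25 * α * β + β ^ 2 + 3 * α * β ^ 2 := by nlinarith
  have hs : (0:ℝ) ≤ β ^ 2 - 11 * β + 16 := by nlinarith
  have h2β : (0:ℝ) ≤ 2 - β := by linarith
  -- the key linear combination
  have key : (((10 + 36 * α - 7 * β - 25 * α * β + β ^ 2 + 3 * α * β ^ 2 : ℝ)) : ℂ) * a₃
      = (((β ^ 2 - 11 * β + 16) * B₁ / 4 : ℝ) : ℂ) * c₂
        + (((β ^ 2 - 11 * β + 16) * (B₂ - B₁) / 8 : ℝ) : ℂ) * c₁ ^ 2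
        + (((1 + 2 * α) * D₁ / 2 : ℝ) : ℂ) * b₂
        + (((1 + 2 * α) * (D₂ - D₁) / 4 : ℝ) : ℂ) * b₁ ^ 2 := by
    push_cast
    linear_combination (((β:ℂ) ^ 2 - 11 * β + 16) / 2) * h2 + (1 + 2 * (α:ℂ)) * h4
  -- relation for b₁
  have hb1 : (((D₁ * (1 + 2 * α) : ℝ)) : ℂ) * b₁ = -((((2 - β) * B₁ : ℝ) : ℂ) * c₁) := by
    push_cast
    linear_combination (-2 * (1 + 2 * (α:ℂ))) * h3 + (-2 * ((2:ℂ) - β)) * h1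
  have hab : D₁ * (1 + 2 * α) * ‖b₁‖ = (2 - β) * B₁ * ‖c₁‖ := by
    have h := congrArg (‖·‖) hb1
    rwa [norm_mul, norm_neg, norm_mul, Complex.norm_real, Real.norm_eq_abs, Complex.norm_real, Real.norm_eq_abs,
      abs_of_pos (by positivity), abs_of_nonneg (by positivity)] at h
  set x1 := ‖c₂‖ with hx1
  set x2 := ‖c₁‖ with hx2
  set x3 := ‖b₂‖ with hx3
  set x4 := ‖b₁‖ with hx4
  have hx2n : (0:ℝ) ≤ x2 := norm_nonneg _
  have hx4n : (0:ℝ) ≤ x4 := norm_nonneg _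
  have hx1n : (0:ℝ) ≤ x1 := norm_nonneg _
  have hx3n : (0:ℝ) ≤ x3 := norm_nonneg _
  have hx2sq : x2 ^ 2 ≤ 4 := by nlinarith
  -- bound the fourth term
  have t4 : (1 + 2 * α) * |D₂ - D₁| / 4 * x4 ^ 2
      ≤ (2 - β) ^ 2 * B₁ ^ 2 * |D₂ - D₁| / (D₁ ^ 2 * (1 + 2 * α)) := by
    rw [le_div_iff₀ (by positivity)]
    have hsq : (D₁ * (1 + 2 * α)) ^ 2 * x4 ^ 2 = ((2 - β) * B₁) ^ 2 * x2 ^ 2 := by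
      have h := congrArg (· ^ 2) hab
      simp only [mul_pow] at h ⊢
      linarith [h]
    nlinarith [abs_nonneg (D₂ - D₁),
      mul_nonneg (mul_nonneg (abs_nonneg (D₂ - D₁)) (sq_nonneg (2 - β))) (sq_nonneg B₁)]
  set T1 : ℂ := (((β ^ 2 - 11 * β + 16) * B₁ / 4 : ℝ) : ℂ) * c₂ with hT1
  set T2 : ℂ := (((β ^ 2 - 11 * β + 16) * (B₂ - B₁) / 8 : ℝ) : ℂ) * c₁ ^ 2 with hT2
  set T3 : ℂ := (((1 + 2 * α) * D₁ / 2 : ℝ) : ℂ) * b₂ with hT3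
  set T4 : ℂ := (((1 + 2 * α) * (D₂ - D₁) / 4 : ℝ) : ℂ) * b₁ ^ 2 with hT4
  have tri : ‖T1 + T2 + T3 + T4‖
      ≤ ‖T1‖ + ‖T2‖ + ‖T3‖ + ‖T4‖ := by
    calc ‖T1 + T2 + T3 + T4‖
        ≤ ‖T1 + T2 + T3‖ + ‖T4‖ := norm_add_le _ _
      _ ≤ (‖T1 + T2‖ + ‖T3‖) + ‖T4‖ :=
          add_le_add_left (norm_add_le _ _) _
      _ ≤ ((‖T1‖ + ‖T2‖) + ‖T3‖) + ‖T4‖ :=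
          add_le_add_left (add_le_add_left (norm_add_le _ _) _) _
  have eT1 : ‖T1‖ = |(β ^ 2 - 11 * β + 16) * B₁ / 4| * x1 := by
    rw [hT1, norm_mul, Complex.norm_real, Real.norm_eq_abs]
  have eT2 : ‖T2‖ = |(β ^ 2 - 11 * β + 16) * (B₂ - B₁) / 8| * x2 ^ 2 := by
    rw [hT2, norm_mul, norm_pow, Complex.norm_real, Real.norm_eq_abs]
  have eT3 : ‖T3‖ = |(1 + 2 * α) * D₁ / 2| * x3 := by
    rw [hT3, norm_mul, Complex.norm_real, Real.norm_eq_abs]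
  have eT4 : ‖T4‖ = |(1 + 2 * α) * (D₂ - D₁) / 4| * x4 ^ 2 := by
    rw [hT4, norm_mul, norm_pow, Complex.norm_real, Real.norm_eq_abs]
  have main : (10 + 36 * α - 7 * β - 25 * α * β + β ^ 2 + 3 * α * β ^ 2) * ‖a₃‖
      ≤ |(β ^ 2 - 11 * β + 16) * B₁ / 4| * x1
        + |(β ^ 2 - 11 * β + 16) * (B₂ - B₁) / 8| * x2 ^ 2
        + |(1 + 2 * α) * D₁ / 2| * x3
        + |(1 + 2 * α) * (D₂ - D₁) / 4| * x4 ^ 2 := by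
    have hLHS : (10 + 36 * α - 7 * β - 25 * α * β + β ^ 2 + 3 * α * β ^ 2) * ‖a₃‖
        = ‖(((10 + 36 * α - 7 * β - 25 * α * β + β ^ 2 + 3 * α * β ^ 2 : ℝ)) : ℂ) * a₃‖ := by
      rw [norm_mul, Complex.norm_real, Real.norm_eq_abs, abs_of_pos hσ]
    rw [hLHS, key, ← eT1, ← eT2, ← eT3, ← eT4]
    exact tri
  refine main.trans ?_
  have e1 : |(β ^ 2 - 11 * β + 16) * B₁ / 4| = (β ^ 2 - 11 * β + 16) * B₁ / 4 :=
    abs_of_nonneg (by positivity)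
  have e2 : |(β ^ 2 - 11 * β + 16) * (B₂ - B₁) / 8| = (β ^ 2 - 11 * β + 16) * |B₂ - B₁| / 8 := by
    rw [abs_div, abs_mul, abs_of_nonneg hs]
    norm_num
  have e3 : |(1 + 2 * α) * D₁ / 2| = (1 + 2 * α) * D₁ / 2 := abs_of_nonneg (by positivity)
  have e4 : |(1 + 2 * α) * (D₂ - D₁) / 4| = (1 + 2 * α) * |D₂ - D₁| / 4 := by
    rw [abs_div, abs_mul, abs_of_pos hA]
    norm_num
  rw [e1, e2, e3, e4]
  have t1 : (β ^ 2 - 11 * β + 16) * B₁ / 4 * x1 ≤ 1 / 2 * B₁ * (β ^ 2 - 11 * β + 16) := by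
    have h := mul_le_mul_of_nonneg_left hc₂
      (show (0:ℝ) ≤ (β ^ 2 - 11 * β + 16) * B₁ / 4 by positivity)
    linarith
  have t2 : (β ^ 2 - 11 * β + 16) * |B₂ - B₁| / 8 * x2 ^ 2
      ≤ 1 / 2 * (β ^ 2 - 11 * β + 16) * |B₂ - B₁| := by
    have h := mul_le_mul_of_nonneg_left hx2sq
      (show (0:ℝ) ≤ (β ^ 2 - 11 * β + 16) * |B₂ - B₁| / 8 by positivity)
    linarith
  have t3 : (1 + 2 * α) * D₁ / 2 * x3 ≤ D₁ * (1 + 2 * α) := by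
    have h := mul_le_mul_of_nonneg_left hb₂
      (show (0:ℝ) ≤ (1 + 2 * α) * D₁ / 2 by positivity)
    linarith
  linarith only [t1, t2, t3, t4]
end
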